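/- Let R be a commutative ring of prime characteristic p and let 𝔭 ⊆ R be a prime ideal. If R is purely F-regular along 𝔭, then the polynomial ring R[t] in one variable is purely F-regular along the extended ideal 𝔭·R[t] (the ideal of polynomials all of whose coefficients lie in 𝔭). -/

import Mathlib

/-- `φ` is a `p^e`-linear map: an additive map with `φ (a^(p^e) * b) = a * φ b`. -/
def IsPLinearMap (p e : ℕ) {R : Type*} [CommRing R] (φ : R →+ R) : Prop :=
  ∀ a b : R, φ (a ^ p ^ e * b) = a * φ b

/-- `R` is purely `F`-regular along the ideal `q`: for every `c ∉ q` there are `e ≥ 1` and a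
`p^e`-linear map `φ` with `φ q ⊆ q` and `φ c = 1`. -/
def PurelyFRegularAlong (p : ℕ) {R : Type*} [CommRing R] (q : Ideal R) : Prop :=
  ∀ c : R, c ∉ q → ∃ e : ℕ, 1 ≤ e ∧ ∃ φ : R →+ R,
    IsPLinearMap p e φ ∧ (∀ x ∈ q, φ x ∈ q) ∧ φ c = 1

open Polynomial

/-- Auxiliary additive map on polynomials: `(Φaux φ d m f).coeff n = φ (f.coeff (d + n * m))`. -/
noncomputable def Φaux {R : Type*} [CommRing R] (φ : R →+ R) (d m : ℕ)
    (hm : Function.Injective fun j : ℕ => d + j * m) : R[X] →+ R[X] :=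
  ((((Polynomial.toFinsuppIso R).symm : AddMonoidAlgebra R ℕ ≃+* R[X]).toRingHom.toAddMonoidHom).comp
    (AddMonoidAlgebra.coeffAddEquiv (R := R) (M := ℕ)).symm.toAddMonoidHom).comp
    ((Finsupp.comapDomain.addMonoidHom hm).comp
      ((Finsupp.mapRange.addMonoidHom (φ : R →+ R)).comp
        (((AddMonoidAlgebra.coeffAddEquiv (R := R) (M := ℕ)).toAddMonoidHom).comp
        ((Polynomial.toFinsuppIso R : R[X] ≃+* AddMonoidAlgebra R ℕ).toRingHom.toAddMonoidHom))))

lemma Φaux_coeff {R : Type*} [CommRing R] (φ : R →+ R) (d m : ℕ)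
    (hm : Function.Injective fun j : ℕ => d + j * m) (f : R[X]) (n : ℕ) :
    (Φaux φ d m hm f).coeff n = φ (f.coeff (d + n * m)) := by
  simp [Φaux, Finsupp.comapDomain.addMonoidHom, Finsupp.comapDomain,
    Finsupp.mapRange.addMonoidHom, toFinsuppIso, ← Polynomial.toFinsupp_apply,
    AddMonoidAlgebra.coeffAddEquiv]

/-- Amplification: iterate a `p^e`-linear map to get a `p^(k*e)`-linear one with the
same properties. -/
lemma amplify (p : ℕ) {R : Type*} [CommRing R] (q : Ideal R) (c : R)
    (e : ℕ) (φ : R →+ R) (hφ : IsPLinearMap p e φ)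
    (hq : ∀ x ∈ q, φ x ∈ q) (hc : φ c = 1) :
    ∀ k : ℕ, 1 ≤ k → ∃ ψ : R →+ R, IsPLinearMap p (k * e) ψ ∧
      (∀ x ∈ q, ψ x ∈ q) ∧ ψ c = 1 := by
  intro k hk
  induction k, hk using Nat.le_induction with
  | base => exact ⟨φ, by simpa using hφ, hq, hc⟩
  | succ k hk ih =>
    obtain ⟨ψ, hψ, hψq, hψc⟩ := ih
    refine ⟨φ.comp (ψ.comp (AddMonoidHom.mulLeft (c ^ p ^ (k * e)))), ?_, ?_, ?_⟩
    · intro a b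
      have key : c ^ p ^ (k * e) * (a ^ p ^ ((k + 1) * e) * b)
          = (a ^ p ^ e) ^ p ^ (k * e) * (c ^ p ^ (k * e) * b) := by
        rw [← pow_mul, ← pow_add, show e + k * e = (k + 1) * e by ring]
        ring
      simp only [AddMonoidHom.comp_apply, AddMonoidHom.mulLeft, AddMonoidHom.coe_mk,
        ZeroHom.coe_mk]
      rw [key, hψ, hφ]
    · intro x hx
      exact hq _ (hψq _ (Ideal.mul_mem_left q _ hx))
    · simp only [AddMonoidHom.comp_apply, AddMonoidHom.mulLeft, AddMonoidHom.coe_mk,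
        ZeroHom.coe_mk]
      rw [hψ c c, hψc, mul_one, hc]

/-- If `R` is purely F-regular along a prime `𝔭`, then `R[t]` is purely F-regular along the
extended ideal `𝔭 R[t]`. -/
theorem purelyFRegularAlong_polynomial (p : ℕ) (hp : p.Prime)
    (R : Type*) [CommRing R] [CharP R p] (𝔭 : Ideal R) (h𝔭 : 𝔭.IsPrime)
    (h : PurelyFRegularAlong p 𝔭) :
    PurelyFRegularAlong p (𝔭.map (Polynomial.C : R →+* Polynomial R)) := by
  haveI : Fact p.Prime := ⟨hp⟩
  intro c hc
  rw [Ideal.mem_map_C_iff] at hc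
  push_neg at hc
  obtain ⟨d, hd⟩ := hc
  -- `d ≤ natDegree c`
  have hd0 : c.coeff d ≠ 0 := fun h0 => hd (h0 ▸ 𝔭.zero_mem)
  have hdle : d ≤ c.natDegree := le_natDegree_of_ne_zero hd0
  obtain ⟨e0, he0, φ, hφ, hφq, hφc⟩ := h (c.coeff d) hd
  set k : ℕ := c.natDegree + 1 with hk
  obtain ⟨ψ, hψ, hψq, hψc⟩ := amplify p 𝔭 (c.coeff d) e0 φ hφ hφq hφc k (by omega)
  set e : ℕ := k * e0 with he
  have he1 : 1 ≤ e := by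
    have := Nat.one_le_iff_ne_zero.mpr (by positivity : k * e0 ≠ 0)
    simpa [he] using this
  -- `p ^ e > natDegree c`
  have hpe : c.natDegree < p ^ e := by
    calc c.natDegree < k := by omega
    _ ≤ e := Nat.le_mul_of_pos_right k (by omega)
    _ < p ^ e := Nat.lt_pow_self (n := e) hp.one_lt
  have hpd : d < p ^ e := lt_of_le_of_lt hdle hpe
  have hq0 : 0 < p ^ e := pos_of_gt hpd
  have hm : Function.Injective fun j : ℕ => d + j * p ^ e := by
    intro a b hab
    simp only at hab
    exact Nat.eq_of_mul_eq_mul_right hq0 (by omega)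
  refine ⟨e, he1, Φaux ψ d (p ^ e) hm, ?_, ?_, ?_⟩
  · -- p^e-linearity
    intro g f
    induction g using Polynomial.induction_on' with
    | add u v hu hv =>
      rw [add_pow_char_pow, add_mul, map_add, hu, hv, add_mul]
    | monomial m a =>
      ext n
      rw [Φaux_coeff]
      have hmon : (monomial m a) ^ p ^ e * f = C (a ^ p ^ e) * (f * X ^ (m * p ^ e)) := by
        rw [Polynomial.monomial_pow, ← Polynomial.C_mul_X_pow_eq_monomial]
        ring
      rw [hmon, coeff_C_mul, coeff_mul_X_pow']
      rcases le_or_gt m n with hmn | hmn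
      · have h1 : m * p ^ e ≤ d + n * p ^ e :=
          le_trans (Nat.mul_le_mul_right _ hmn) (Nat.le_add_left _ _)
        have h2 : d + n * p ^ e - m * p ^ e = d + (n - m) * p ^ e := by
          have := Nat.mul_le_mul_right (p ^ e) hmn
          rw [Nat.sub_mul]
          omega
        rw [if_pos h1, h2, hψ]
        rw [← Polynomial.C_mul_X_pow_eq_monomial]
        rw [show C a * X ^ m * Φaux ψ d (p ^ e) hm f
            = C a * (Φaux ψ d (p ^ e) hm f * X ^ m) by ring]
        rw [coeff_C_mul, coeff_mul_X_pow', if_pos hmn, Φaux_coeff]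
      · have h1 : ¬ (m * p ^ e ≤ d + n * p ^ e) := by
          have : (n + 1) * p ^ e ≤ m * p ^ e := Nat.mul_le_mul_right _ hmn
          rw [add_mul, one_mul] at this
          omega
        rw [if_neg h1, mul_zero, map_zero]
        rw [← Polynomial.C_mul_X_pow_eq_monomial]
        rw [show C a * X ^ m * Φaux ψ d (p ^ e) hm f
            = C a * (Φaux ψ d (p ^ e) hm f * X ^ m) by ring]
        rw [coeff_C_mul, coeff_mul_X_pow', if_neg (not_le.mpr hmn), mul_zero]
  · -- preserves the ideal
    intro f hf
    rw [Ideal.mem_map_C_iff] at hf ⊢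
    intro n
    rw [Φaux_coeff]
    exact hψq _ (hf _)
  · -- sends c to 1
    ext n
    rw [Φaux_coeff, Polynomial.coeff_one]
    rcases Nat.eq_zero_or_pos n with hn | hn
    · subst hn; simpa using hψc
    · have : c.natDegree < d + n * p ^ e := by
        have : p ^ e ≤ n * p ^ e := Nat.le_mul_of_pos_left _ hn
        omega
      rw [Polynomial.coeff_eq_zero_of_natDegree_lt this, map_zero, if_neg (by omega)]
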